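/- Let x_s, x_d ∈ ℝ² with ‖x_s − x_d‖ = 2d, d > 0. For every real T with 0 ≤ T < d, the set {x ∈ ℝ² : max(‖x_s − x‖, ‖x − x_d‖) ≤ T} is empty; and for every T > d, its two-dimensional Lebesgue measure equals πT² − 2d√(T² − d²) − 2T²·arctan(d/√(T² − d²)). (This is the area of the lens-shaped intersection of the two discs of radius T centered at x_s and x_d, and equals μ(T)/λ, the normalized mean feedback load of the threshold-T selective feedback policy under a homogeneous Poisson relay process of intensity λ.) -/

import Mathlib

open Real MeasureTheory intervalIntegral

private lemma sqrt_int (d T : ℝ) (hd : 0 < d) (hT : d < T) :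
    ∫ u in d..T, Real.sqrt (T^2 - u^2)
      = π*T^2/4 - d * Real.sqrt (T^2 - d^2)/2 - T^2 * Real.arcsin (d/T)/2 := by
  have hT0 : 0 < T := hd.trans hT
  set F : ℝ → ℝ := fun u => (u * Real.sqrt (T^2-u^2) + T^2 * Real.arcsin (u/T))/2 with hF
  have key : ∫ u in d..T, Real.sqrt (T^2 - u^2) = F T - F d := by
    apply integral_eq_sub_of_hasDerivAt_of_le hT.le
    · apply ContinuousOn.div_const
      apply ContinuousOn.add
      · exact (continuousOn_id).mul ((continuous_const.sub (continuous_pow 2)).continuousOn.sqrt)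
      · exact continuousOn_const.mul (Real.continuous_arcsin.comp_continuousOn
          (continuousOn_id.div_const T))
    · intro u hu
      have hu0 : 0 < u := hd.trans hu.1
      have hM : 0 < T^2 - u^2 := by nlinarith [hu.2, hu0]
      have hMne : Real.sqrt (T^2 - u^2) ≠ 0 := by positivity
      have h1 : HasDerivAt (fun u : ℝ => T^2 - u^2) (-(2*u)) u := by
        simpa using (hasDerivAt_pow 2 u).const_sub (T^2)
      have h2 : HasDerivAt (fun u : ℝ => Real.sqrt (T^2-u^2))
          (1/(2*Real.sqrt (T^2-u^2)) * (-(2*u))) u :=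
        (Real.hasDerivAt_sqrt hM.ne').comp u h1
      have h3 : HasDerivAt (fun u : ℝ => u * Real.sqrt (T^2-u^2))
          (1 * Real.sqrt (T^2-u^2) + u * (1/(2*Real.sqrt (T^2-u^2)) * (-(2*u)))) u :=
        (hasDerivAt_id u).mul h2
      have h4 : HasDerivAt (fun u : ℝ => Real.arcsin (u/T))
          (1/Real.sqrt (1 - (u/T)^2) * (1/T)) u := by
        have hne1 : u/T ≠ -1 := by
          have : 0 < u/T := div_pos hu0 hT0; linarith
        have hne2 : u/T ≠ 1 := by
          have : u/T < 1 := (div_lt_one hT0).2 hu.2; linarith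
        exact (Real.hasDerivAt_arcsin hne1 hne2).comp u ((hasDerivAt_id u).div_const T)
      have hsq : Real.sqrt (1 - (u/T)^2) = Real.sqrt (T^2-u^2) / T := by
        rw [show (1 : ℝ) - (u/T)^2 = (T^2-u^2)/T^2 by field_simp,
          Real.sqrt_div hM.le, Real.sqrt_sq hT0.le]
      have := ((h3.add ((HasDerivAt.const_mul (T^2) h4)))).div_const 2
      refine this.congr_deriv ?_
      symm
      rw [hsq]
      have hsq2 : Real.sqrt (T^2-u^2) ^ 2 = T^2 - u^2 := Real.sq_sqrt hM.le
      field_simp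
      linear_combination hsq2
    · exact ((continuous_const.sub (continuous_pow 2)).sqrt).intervalIntegrable d T
  rw [key, hF]
  simp only []
  rw [show T^2 - T^2 = 0 by ring, Real.sqrt_zero, div_self hT0.ne', Real.arcsin_one]
  ring

private lemma line_int (d T : ℝ) (hd : 0 < d) (hT : d < T) :
    ∫ x : ℝ, 2 * Real.sqrt (T^2 - (|x|+d)^2)
      = π*T^2 - 2*d*Real.sqrt (T^2-d^2) - 2*T^2*Real.arcsin (d/T) := by
  have hT0 : 0 < T := hd.trans hT
  set g : ℝ → ℝ := fun x => 2 * Real.sqrt (T^2 - (|x|+d)^2) with hg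
  have hgc : Continuous g := by
    exact continuous_const.mul ((continuous_const.sub
      (((continuous_abs.add continuous_const).pow 2))).sqrt)
  have hsupp : Function.support g ⊆ Set.Ioc (-(T-d)) (T-d) := by
    intro x hx
    rcases le_or_gt x (T-d) with h1 | h1
    · rcases lt_or_ge (-(T-d)) x with h2 | h2
      · exact ⟨h2, h1⟩
      · exfalso; apply hx
        have hax : T - d ≤ |x| := by
          rw [abs_of_nonpos (by linarith)]; linarith
        have hle : T ^ 2 - (|x| + d) ^ 2 ≤ 0 := by nlinarith [abs_nonneg x]
        simp [hg, Real.sqrt_eq_zero'.mpr hle]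
    · exfalso; apply hx
      have hax : T - d ≤ |x| := le_trans h1.le (le_abs_self x)
      have hle : T ^ 2 - (|x| + d) ^ 2 ≤ 0 := by nlinarith [abs_nonneg x]
      simp [hg, Real.sqrt_eq_zero'.mpr hle]
  have hii : ∀ a b : ℝ, IntervalIntegrable g volume a b := fun a b => hgc.intervalIntegrable a b
  have step1 : ∫ x : ℝ, g x = ∫ x in (-(T-d))..(T-d), g x :=
    (intervalIntegral.integral_eq_integral_of_support_subset hsupp).symm
  have step2 : ∫ x in (-(T-d))..(T-d), g x
      = (∫ x in (-(T-d))..(0:ℝ), g x) + ∫ x in (0:ℝ)..(T-d), g x :=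
    (intervalIntegral.integral_add_adjacent_intervals (hii _ _) (hii _ _)).symm
  have hgeven : (fun x => g (-x)) = g := by
    funext x; simp [hg, abs_neg]
  have step3 : ∫ x in (-(T-d))..(0:ℝ), g x = ∫ x in (0:ℝ)..(T-d), g x := by
    have h := intervalIntegral.integral_comp_neg (a := (0:ℝ)) (b := T-d) g
    simp only [neg_zero] at h
    rw [hgeven] at h
    exact h.symm
  have step4 : ∫ x in (0:ℝ)..(T-d), g x
      = ∫ x in (0:ℝ)..(T-d), 2 * Real.sqrt (T^2 - (x+d)^2) := by
    apply intervalIntegral.integral_congr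
    intro x hx
    rw [Set.uIcc_of_le (by linarith)] at hx
    simp [hg, abs_of_nonneg hx.1]
  have step5 : ∫ x in (0:ℝ)..(T-d), 2 * Real.sqrt (T^2 - (x+d)^2)
      = ∫ u in d..T, 2 * Real.sqrt (T^2 - u^2) := by
    rw [intervalIntegral.integral_comp_add_right (f := fun u => 2 * Real.sqrt (T^2 - u^2)) d]
    norm_num
  have step6 : ∫ u in d..T, 2 * Real.sqrt (T^2 - u^2) = 2 * ∫ u in d..T, Real.sqrt (T^2 - u^2) :=
    intervalIntegral.integral_const_mul 2 _
  rw [hg] at step1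
  rw [step1, step2, step3, step4, step5, step6, sqrt_int d T hd hT]
  ring

private lemma prod_vol (d T : ℝ) (hd : 0 < d) (hT : d < T) :
    volume {p : ℝ × ℝ | Real.sqrt ((p.1+d)^2 + p.2^2) ≤ T ∧ Real.sqrt ((p.1-d)^2 + p.2^2) ≤ T}
      = ENNReal.ofReal (π*T^2 - 2*d*Real.sqrt (T^2-d^2) - 2*T^2*Real.arcsin (d/T)) := by
  have hT0 : 0 < T := hd.trans hT
  set A : Set (ℝ × ℝ) :=
    {p : ℝ × ℝ | Real.sqrt ((p.1+d)^2 + p.2^2) ≤ T ∧ Real.sqrt ((p.1-d)^2 + p.2^2) ≤ T} with hA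
  have hc1 : Continuous fun p : ℝ × ℝ => Real.sqrt ((p.1+d)^2 + p.2^2) :=
    ((((continuous_fst.add continuous_const).pow 2).add (continuous_snd.pow 2))).sqrt
  have hc2 : Continuous fun p : ℝ × ℝ => Real.sqrt ((p.1-d)^2 + p.2^2) :=
    ((((continuous_fst.sub continuous_const).pow 2).add (continuous_snd.pow 2))).sqrt
  have hAm : MeasurableSet A :=
    ((isClosed_le hc1 continuous_const).inter (isClosed_le hc2 continuous_const)).measurableSet
  have hslice : ∀ x : ℝ, Prod.mk x ⁻¹' A = {y : ℝ | y^2 ≤ T^2 - (|x|+d)^2} := by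
    intro x
    ext y
    simp only [hA, Set.mem_preimage, Set.mem_setOf_eq, Real.sqrt_le_left hT0.le]
    constructor
    · rintro ⟨h1, h2⟩
      rcases le_or_gt 0 x with hx | hx
      · rw [abs_of_nonneg hx]; nlinarith
      · rw [abs_of_neg hx]; nlinarith
    · intro h
      have k1 : x ≤ |x| := le_abs_self x
      have k2 : -x ≤ |x| := neg_le_abs x
      constructor <;> nlinarith [abs_nonneg x]
  have hvol : ∀ x : ℝ, volume {y : ℝ | y^2 ≤ T^2 - (|x|+d)^2}
      = ENNReal.ofReal (2 * Real.sqrt (T^2 - (|x|+d)^2)) := by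
    intro x
    set M := T^2 - (|x|+d)^2 with hM
    rcases le_or_gt 0 M with hM0 | hM0
    · have : {y : ℝ | y^2 ≤ M} = Set.Icc (-Real.sqrt M) (Real.sqrt M) := by
        ext y
        simp only [Set.mem_setOf_eq, Set.mem_Icc, ← abs_le]
        constructor
        · exact fun h => Real.abs_le_sqrt h
        · intro h
          calc y^2 = |y|^2 := (sq_abs y).symm
          _ ≤ Real.sqrt M ^ 2 := pow_le_pow_left₀ (abs_nonneg y) h 2
          _ = M := Real.sq_sqrt hM0
      rw [this, Real.volume_Icc]
      congr 1
      ring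
    · have : {y : ℝ | y^2 ≤ M} = ∅ := by
        ext y; simp only [Set.mem_setOf_eq, Set.mem_empty_iff_false, iff_false]
        nlinarith [sq_nonneg y]
      rw [this, Real.sqrt_eq_zero'.mpr hM0.le]
      simp
  have hgc : Continuous (fun x : ℝ => 2 * Real.sqrt (T^2 - (|x|+d)^2)) :=
    continuous_const.mul ((continuous_const.sub
      (((continuous_abs.add continuous_const).pow 2))).sqrt)
  have hcs : HasCompactSupport (fun x : ℝ => 2 * Real.sqrt (T^2 - (|x|+d)^2)) := by
    apply HasCompactSupport.intro (isCompact_Icc (a := -(T-d)) (b := T-d))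
    intro x hx
    have : T - d ≤ |x| := by
      rcases not_and_or.mp (fun h : -(T-d) ≤ x ∧ x ≤ T-d => hx ⟨h.1, h.2⟩) with h | h
      · push_neg at h
        rw [abs_of_nonpos (by linarith)]; linarith
      · push_neg at h
        exact le_trans h.le (le_abs_self x)
    have hle : T ^ 2 - (|x| + d) ^ 2 ≤ 0 := by nlinarith [abs_nonneg x]
    simp [Real.sqrt_eq_zero'.mpr hle]
  have hint : Integrable (fun x : ℝ => 2 * Real.sqrt (T^2 - (|x|+d)^2)) :=
    hgc.integrable_of_hasCompactSupport hcs
  rw [Measure.volume_eq_prod ℝ ℝ, Measure.prod_apply hAm]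
  have hcongr : ∫⁻ x, volume (Prod.mk x ⁻¹' A) = ∫⁻ x : ℝ,
      ENNReal.ofReal (2 * Real.sqrt (T^2 - (|x|+d)^2)) :=
    lintegral_congr fun x => by rw [hslice x, hvol x]
  rw [hcongr, ← ofReal_integral_eq_lintegral_ofReal hint
    (Filter.Eventually.of_forall fun x => by positivity), line_int d T hd hT]

/-- Feedback region of the threshold-`T` selective feedback policy: with
`‖xs − xd‖ = 2d`, `d > 0`, the set `{x : max ‖xs − x‖ ‖x − xd‖ ≤ T}` is empty for
`0 ≤ T < d`, and for `T > d` its two-dimensional Lebesgue measure (the lens-shaped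
intersection of the two radius-`T` discs) equals
`πT² − 2d√(T² − d²) − 2T² arctan (d / √(T² − d²))`. -/
theorem feedback_region_measure (xs xd : EuclideanSpace ℝ (Fin 2)) (d : ℝ)
    (hd : 0 < d) (hdist : ‖xs - xd‖ = 2 * d) :
    (∀ T : ℝ, 0 ≤ T → T < d →
      {x : EuclideanSpace ℝ (Fin 2) | max ‖xs - x‖ ‖x - xd‖ ≤ T} = ∅) ∧
    (∀ T : ℝ, d < T →
      volume {x : EuclideanSpace ℝ (Fin 2) | max ‖xs - x‖ ‖x - xd‖ ≤ T}
        = ENNReal.ofReal (π * T ^ 2 - 2 * d * Real.sqrt (T ^ 2 - d ^ 2)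
            - 2 * T ^ 2 * Real.arctan (d / Real.sqrt (T ^ 2 - d ^ 2)))) := by
  constructor
  · intro T hT0 hTd
    ext x
    simp only [Set.mem_setOf_eq, Set.mem_empty_iff_false, iff_false]
    intro hmax
    obtain ⟨h1, h2⟩ := max_le_iff.mp hmax
    have htri := norm_add_le (xs - x) (x - xd)
    rw [sub_add_sub_cancel, hdist] at htri
    linarith
  · intro T hT
    have hT0 : 0 < T := hd.trans hT
    -- orthonormal basis adapted to the segment
    have hv : ‖xd - xs‖ = 2*d := by rw [← neg_sub, norm_neg]; exact hdist
    set v : Fin 2 → EuclideanSpace ℝ (Fin 2) := fun _ => (2*d)⁻¹ • (xd - xs) with hvdef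
    have hortho : Orthonormal ℝ (Set.restrict {0} v) := by
      constructor
      · rintro ⟨i, hi⟩
        show ‖(2*d)⁻¹ • (xd - xs)‖ = 1
        simp only [Set.restrict_apply, hvdef, norm_smul, hv, norm_inv, Real.norm_eq_abs,
          abs_of_pos (by positivity : (0:ℝ) < 2*d)]
        field_simp
      · rintro ⟨i, hi⟩ ⟨j, hj⟩ hij
        exact absurd (Subtype.ext (hi.trans hj.symm)) hij
    obtain ⟨b, hb⟩ := hortho.exists_orthonormalBasis_extension_of_card_eq (by simp)
    have hb0 : b 0 = (2*d)⁻¹ • (xd - xs) := hb 0 rfl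
    set m : EuclideanSpace ℝ (Fin 2) := (2:ℝ)⁻¹ • (xs + xd) with hm
    have hxsm : xs - m = (-d) • b 0 := by
      rw [hb0, smul_smul, show (-d) * (2*d)⁻¹ = -(2:ℝ)⁻¹ by field_simp, hm]
      module
    have hxdm : xd - m = d • b 0 := by
      rw [hb0, smul_smul, show d * (2*d)⁻¹ = (2:ℝ)⁻¹ by field_simp, hm]
      module
    set Φ : EuclideanSpace ℝ (Fin 2) → ℝ × ℝ := fun x =>
      MeasurableEquiv.finTwoArrow ((MeasurableEquiv.toLp 2 (Fin 2 → ℝ)).symm (b.repr (x - m))) with hΦ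
    have hΦmp : MeasurePreserving Φ volume volume :=
      ((volume_preserving_finTwoArrow ℝ).comp
        ((EuclideanSpace.volume_preserving_symm_measurableEquiv_toLp (Fin 2)).comp
          (b.measurePreserving_repr.comp (measurePreserving_sub_right volume m))))
    have hΦx : ∀ x, Φ x = (b.repr (x - m) 0, b.repr (x - m) 1) := fun x => rfl
    have hn1 : ∀ x : EuclideanSpace ℝ (Fin 2), ‖xs - x‖
        = Real.sqrt ((b.repr (x-m) 0 + d)^2 + (b.repr (x-m) 1)^2) := by
      intro x
      have e1 : xs - x = (xs - m) - (x - m) := by abel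
      rw [← b.repr.norm_map (xs - x), e1, map_sub, hxsm, _root_.map_smul, b.repr_self]
      rw [EuclideanSpace.norm_eq]
      simp only [Fin.sum_univ_two]
      have w0 : ((-d) • EuclideanSpace.single (0 : Fin 2) (1:ℝ) - b.repr (x-m)) 0
          = -d - b.repr (x-m) 0 := by simp [EuclideanSpace.single_apply]
      have w1 : ((-d) • EuclideanSpace.single (0 : Fin 2) (1:ℝ) - b.repr (x-m)) 1
          = - b.repr (x-m) 1 := by simp [EuclideanSpace.single_apply]
      rw [w0, w1]
      simp only [Real.norm_eq_abs, sq_abs]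
      congr 1
      ring
    have hn2 : ∀ x : EuclideanSpace ℝ (Fin 2), ‖x - xd‖
        = Real.sqrt ((b.repr (x-m) 0 - d)^2 + (b.repr (x-m) 1)^2) := by
      intro x
      have e1 : x - xd = (x - m) - (xd - m) := by abel
      rw [← b.repr.norm_map (x - xd), e1, map_sub, hxdm, _root_.map_smul, b.repr_self]
      rw [EuclideanSpace.norm_eq]
      simp only [Fin.sum_univ_two]
      have w0 : (b.repr (x-m) - d • EuclideanSpace.single (0 : Fin 2) (1:ℝ)) 0
          = b.repr (x-m) 0 - d := by simp [EuclideanSpace.single_apply]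
      have w1 : (b.repr (x-m) - d • EuclideanSpace.single (0 : Fin 2) (1:ℝ)) 1
          = b.repr (x-m) 1 := by simp [EuclideanSpace.single_apply]
      rw [w0, w1]
      simp only [Real.norm_eq_abs, sq_abs]
    set A : Set (ℝ × ℝ) :=
      {p : ℝ × ℝ | Real.sqrt ((p.1+d)^2 + p.2^2) ≤ T ∧ Real.sqrt ((p.1-d)^2 + p.2^2) ≤ T}
      with hA
    have hc1 : Continuous fun p : ℝ × ℝ => Real.sqrt ((p.1+d)^2 + p.2^2) :=
      ((((continuous_fst.add continuous_const).pow 2).add (continuous_snd.pow 2))).sqrt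
    have hc2 : Continuous fun p : ℝ × ℝ => Real.sqrt ((p.1-d)^2 + p.2^2) :=
      ((((continuous_fst.sub continuous_const).pow 2).add (continuous_snd.pow 2))).sqrt
    have hAm : MeasurableSet A :=
      ((isClosed_le hc1 continuous_const).inter (isClosed_le hc2 continuous_const)).measurableSet
    have hset : {x : EuclideanSpace ℝ (Fin 2) | max ‖xs - x‖ ‖x - xd‖ ≤ T} = Φ ⁻¹' A := by
      ext x
      simp only [Set.mem_setOf_eq, Set.mem_preimage, max_le_iff, hΦx, hA, hn1 x, hn2 x]
    rw [hset, hΦmp.measure_preimage hAm.nullMeasurableSet, hA, prod_vol d T hd hT]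
    congr 1
    have hmem : d/T ∈ Set.Ioo (-1:ℝ) 1 :=
      ⟨by have : 0 < d/T := div_pos hd hT0; linarith, (div_lt_one hT0).2 hT⟩
    rw [Real.arcsin_eq_arctan hmem]
    have h1 : 1 - (d/T)^2 = (T^2-d^2)/T^2 := by field_simp
    have hTd2 : 0 < T^2 - d^2 := by nlinarith
    have hs : Real.sqrt (T^2-d^2) ≠ 0 := by positivity
    rw [h1, Real.sqrt_div hTd2.le, Real.sqrt_sq hT0.le,
      show d/T / (Real.sqrt (T^2-d^2)/T) = d / Real.sqrt (T^2-d^2) by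
        field_simp]
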